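/- Let A be a unital complex Banach algebra, f, i, D, I ∈ A, M = T(f,i) = ![![f, 0], ![i, f]] and P = T(D,I) = ![![D, 0], ![I, D]] in Matrix (Fin 2) (Fin 2) A. Set x = ∑'_{n : ℕ} ((n+1)! : ℂ)⁻¹ • (∑_{k=0}^{n} f^k * i * f^{n−k}). Then exp(M) * P * exp(−M) = ![![exp f * D * exp(−f), 0], ![exp f * I * exp(−f) − ⁅exp f * D * exp(−f), x * exp(−f)⁆, exp f * D * exp(−f)]]. (This is the explicit form of the gauge action e^{ad M}(P) = e^M P e^{−M} in the matrix model; note the sign of the commutator term.) -/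

import Mathlib

open NormedSpace

/-- For `a b : A`, `T a b` is the 2×2 matrix `![![a, 0], ![b, a]]`. -/
def T {A : Type*} [Ring A] (a b : A) : Matrix (Fin 2) (Fin 2) A :=
  ![![a, 0], ![b, a]]

section aux
variable {A : Type*} [Ring A]

lemma T_mul (a b c d : A) : T a b * T c d = T (a*c) (b*c + a*d) := by
  ext i j
  fin_cases i <;> fin_cases j <;>
    simp [Matrix.mul_apply, Fin.sum_univ_two] <;> simp [T]

lemma T_smul (c : ℂ) [Module ℂ A] (a b : A) : c • T a b = T (c • a) (c • b) := by
  ext i j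
  fin_cases i <;> fin_cases j <;> simp [Matrix.smul_apply] <;> simp [T]

lemma T_neg (a b : A) : -(T a b) = T (-a) (-b) := by
  ext i j
  fin_cases i <;> fin_cases j <;> simp [Matrix.neg_apply] <;> simp [T]

lemma T_add (a b c d : A) : T a b + T c d = T (a + c) (b + d) := by
  ext i j
  fin_cases i <;> fin_cases j <;> simp [Matrix.add_apply] <;> simp [T]

lemma T_one : (1 : Matrix (Fin 2) (Fin 2) A) = T 1 0 := by
  ext i j
  fin_cases i <;> fin_cases j <;> simp [T, Matrix.one_apply]

lemma T_pow (a b : A) (n : ℕ) :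
    (T a b)^n = T (a^n) (∑ k ∈ Finset.range n, a^k * b * a^(n-1-k)) := by
  induction n with
  | zero =>
    ext i j
    fin_cases i <;> fin_cases j <;> simp [Matrix.one_apply] <;> simp [T]
  | succ n ih =>
    rw [pow_succ, ih, T_mul, ← pow_succ, Finset.sum_range_succ, Finset.sum_mul]
    refine congrArg (T (a ^ (n+1))) ?_
    congr 1
    · apply Finset.sum_congr rfl
      intro k hk
      rw [Finset.mem_range] at hk
      have h1 : n + 1 - 1 - k = (n - 1 - k) + 1 := by omega
      rw [h1, pow_succ, ← mul_assoc]
    · have h : n + 1 - 1 - n = 0 := by omega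
      rw [h, pow_zero, mul_one]

/-- Entry `(1,0)` as an additive monoid hom. -/
def entry10 : Matrix (Fin 2) (Fin 2) A →+ A :=
  AddMonoidHom.mk' (fun M => M 1 0) (fun _ _ => rfl)

def Tfst : A →+ Matrix (Fin 2) (Fin 2) A :=
  AddMonoidHom.mk' (fun c => T c 0) (by
    intro x y
    rw [T_add, add_zero])

def Tsnd : A →+ Matrix (Fin 2) (Fin 2) A :=
  AddMonoidHom.mk' (fun c => T 0 c) (by
    intro x y
    rw [T_add, add_zero])

end aux

section normed

variable {A : Type*} [NormedRing A] [NormedAlgebra ℂ A] [CompleteSpace A]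

lemma exp_T (a b : A) :
    exp (T a b) = T (exp a)
      (∑' n : ℕ, (((n + 1).factorial : ℂ))⁻¹ •
        ∑ k ∈ Finset.range (n + 1), a ^ k * b * a ^ (n - k)) := by
  letI : SeminormedRing (Matrix (Fin 2) (Fin 2) A) := Matrix.linftyOpSemiNormedRing
  letI : NormedRing (Matrix (Fin 2) (Fin 2) A) := Matrix.linftyOpNormedRing
  letI : NormedAlgebra ℂ (Matrix (Fin 2) (Fin 2) A) := Matrix.linftyOpNormedAlgebra
  haveI : @CompleteSpace (Matrix (Fin 2) (Fin 2) A)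
      (PseudoMetricSpace.toUniformSpace) := inferInstanceAs (CompleteSpace (Fin 2 → Fin 2 → A))
  set g : ℕ → A := fun n =>
    ((n.factorial : ℂ))⁻¹ • ∑ k ∈ Finset.range n, a ^ k * b * a ^ (n - 1 - k) with hg
  have hfun : (fun n : ℕ => ((n.factorial : ℂ))⁻¹ • T a b ^ n)
      = fun n => T (((n.factorial : ℂ))⁻¹ • a ^ n) (g n) := by
    funext n
    rw [T_pow, T_smul]
  have hexp : HasSum (fun n : ℕ => ((n.factorial : ℂ))⁻¹ • T a b ^ n) (exp (T a b)) :=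
    exp_series_hasSum_exp' (𝕂 := ℂ) (T a b)
  rw [hfun] at hexp
  have hgs : Summable g := by
    have h1 : Continuous (fun M : Matrix (Fin 2) (Fin 2) A => M 1 0) :=
      (continuous_apply (0 : Fin 2)).comp (continuous_apply (1 : Fin 2))
    have h2 := hexp.summable.map (entry10 (A := A)) h1
    have h3 : (fun n => entry10 (T (((n.factorial : ℂ))⁻¹ • a ^ n) (g n))) = g := by
      funext n
      rfl
    rwa [← h3]
  have hXa : HasSum (fun n : ℕ => ((n.factorial : ℂ))⁻¹ • a ^ n) (exp a) :=
    exp_series_hasSum_exp' (𝕂 := ℂ) a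
  have cf : Continuous (Tfst (A := A)) := by
    rw [show (⇑(Tfst (A := A))) = fun c => T c 0 from rfl]
    apply continuous_matrix
    intro i j
    fin_cases i <;> fin_cases j <;> simp only [Tfst, T, AddMonoidHom.mk'_apply] <;> simp [Matrix.cons_val', Matrix.cons_val_zero, Matrix.cons_val_one] <;> fun_prop
  have cs : Continuous (Tsnd (A := A)) := by
    rw [show (⇑(Tsnd (A := A))) = fun c => T 0 c from rfl]
    apply continuous_matrix
    intro i j
    fin_cases i <;> fin_cases j <;> simp only [Tsnd, T, AddMonoidHom.mk'_apply] <;> simp [Matrix.cons_val', Matrix.cons_val_zero, Matrix.cons_val_one] <;> fun_prop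
  have key : HasSum (fun n => T (((n.factorial : ℂ))⁻¹ • a ^ n) (g n))
      (T (exp a) (∑' n, g n)) := by
    have h4 := (hXa.map (Tfst (A := A)) cf).add ((hgs.hasSum).map (Tsnd (A := A)) cs)
    have h5 : (fun n => Tfst (((n.factorial : ℂ))⁻¹ • a ^ n) + Tsnd (g n))
        = fun n => T (((n.factorial : ℂ))⁻¹ • a ^ n) (g n) := by
      funext n
      simp only [Tfst, Tsnd, AddMonoidHom.mk'_apply, Function.comp]
      rw [T_add, add_zero, zero_add]
    have h6 : Tfst (exp a) + Tsnd (∑' n, g n) = T (exp a) (∑' n, g n) := by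
      simp only [Tfst, Tsnd, AddMonoidHom.mk'_apply]
      rw [T_add, add_zero, zero_add]
    rw [← h5, ← h6]
    exact h4
  have hmain : exp (T a b) = T (exp a) (∑' n, g n) := hexp.unique key
  rw [hmain]
  refine congrArg (T (exp a)) ?_
  have h0 : g 0 = 0 := by simp [hg]
  rw [Summable.tsum_eq_zero_add hgs, h0, zero_add]
  apply tsum_congr
  intro n
  simp only [hg]
  congr 1

lemma exp_mul_exp_neg (a : A) : exp a * exp (-a) = 1 := by
  letI : NormedAlgebra ℚ A := NormedAlgebra.restrictScalars ℚ ℂ A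
  rw [← exp_add_of_commute ((Commute.refl a).neg_right), add_neg_cancel, exp_zero]

lemma exp_neg_mul_exp (a : A) : exp (-a) * exp a = 1 := by
  letI : NormedAlgebra ℚ A := NormedAlgebra.restrictScalars ℚ ℂ A
  rw [← exp_add_of_commute ((Commute.refl a).neg_left), neg_add_cancel, exp_zero]

end normed

/-- The gauge action in the matrix model: with `M = T f i`, `P = T D I` and
`x = ∑'_{n} ((n+1)!)⁻¹ • (∑_{k=0}^{n} f^k * i * f^(n-k))`, one has
`exp M * P * exp (-M) = ![![eᶠDe⁻ᶠ, 0], ![eᶠIe⁻ᶠ - ⁅eᶠDe⁻ᶠ, x·e⁻ᶠ⁆, eᶠDe⁻ᶠ]]`. -/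
theorem stmt4 {A : Type*} [NormedRing A] [NormedAlgebra ℂ A] [CompleteSpace A]
    (f i D I : A) :
    exp (T f i) * T D I * exp (-(T f i)) =
      let x : A := ∑' n : ℕ, (((n + 1).factorial : ℂ))⁻¹ •
          ∑ k ∈ Finset.range (n + 1), f ^ k * i * f ^ (n - k)
      ![![exp f * D * exp (-f), 0],
        ![exp f * I * exp (-f) - ⁅exp f * D * exp (-f), x * exp (-f)⁆,
          exp f * D * exp (-f)]] := by
  set x : A := ∑' n : ℕ, (((n + 1).factorial : ℂ))⁻¹ •
      ∑ k ∈ Finset.range (n + 1), f ^ k * i * f ^ (n - k) with hx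
  set e := exp f with he
  set e' := exp (-f) with he'
  show exp (T f i) * T D I * exp (-(T f i)) =
    ![![e * D * e', 0], ![e * I * e' - ⁅e * D * e', x * e'⁆, e * D * e']]
  have hee' : e * e' = 1 := exp_mul_exp_neg f
  have he'e : e' * e = 1 := exp_neg_mul_exp f
  have hMexp : exp (T f i) = T e x := exp_T f i
  rw [T_neg]
  set z : A := ∑' n : ℕ, (((n + 1).factorial : ℂ))⁻¹ •
      ∑ k ∈ Finset.range (n + 1), (-f) ^ k * (-i) * (-f) ^ (n - k) with hzdef
  have hNexp : exp (T (-f) (-i)) = T e' z := exp_T (-f) (-i)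
  -- exp M * exp (-M) = 1 gives the key relation
  have hMM : exp (T f i) * exp (T (-f) (-i)) = 1 := by
    letI : NormedAlgebra ℚ A := NormedAlgebra.restrictScalars ℚ ℂ A
    rw [← T_neg, ← Matrix.exp_add_of_commute _ _ ((Commute.refl (T f i)).neg_right),
      add_neg_cancel, exp_zero]
  rw [hMexp, hNexp, T_mul, T_one] at hMM
  have h10 : x * e' + e * z = 0 := by
    have := congrFun (congrFun hMM 1) 0
    simpa [T] using this
  have hz : e * z = -(x * e') := by rw [add_comm] at h10; exact eq_neg_of_add_eq_zero_left h10
  -- compute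
  rw [hMexp, hNexp, T_mul, T_mul]
  show T (e * D * e') ((x * D + e * I) * e' + e * D * z) = _
  have hRHS : (![![e * D * e', 0], ![e * I * e' - ⁅e * D * e', x * e'⁆, e * D * e']] :
      Matrix (Fin 2) (Fin 2) A) = T (e * D * e') (e * I * e' - ⁅e * D * e', x * e'⁆) := rfl
  rw [hRHS]
  refine congrArg (T (e * D * e')) ?_
  have hez : e * D * z = -(e * D * e' * (x * e')) := by
    have : z = e' * (e * z) := by rw [← mul_assoc, he'e, one_mul]
    rw [this, hz]
    simp only [mul_neg, mul_assoc]
  have hcomm : x * e' * (e * D * e') = x * D * e' := by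
    calc x * e' * (e * D * e') = x * (e' * e) * (D * e') := by
          simp only [mul_assoc]
      _ = x * D * e' := by rw [he'e, mul_one, ← mul_assoc]
  rw [Ring.lie_def, hez]
  rw [add_mul, hcomm]
  abel
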